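/- Let H be a complex Hilbert space, let b be a bounded linear operator on H with 0 ≤ b ≤ 1 (b positive of norm at most 1), and let η ∈ H be a unit vector. Then ‖b·η − η‖ ≤ 4·(1 − ‖b·η‖)^(1/3). -/

import Mathlib

open scoped InnerProductSpace

/-- Let `H` be a complex Hilbert space, `b` a bounded operator on `H` with
`0 ≤ b ≤ 1` (positive of norm at most one), and `η ∈ H` a unit vector.  Then
`‖b·η − η‖ ≤ 4·(1 − ‖b·η‖)^(1/3)`. -/
theorem stmt_3 {H : Type*} [NormedAddCommGroup H] [InnerProductSpace ℂ H] [CompleteSpace H]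
    (b : H →L[ℂ] H) (hb : b.IsPositive) (hbnorm : ‖b‖ ≤ 1)
    (η : H) (hη : ‖η‖ = 1) :
    ‖b η - η‖ ≤ 4 * (1 - ‖b η‖) ^ ((1 : ℝ) / 3) := by
  have ht0 : (0 : ℝ) ≤ ‖b η‖ := norm_nonneg _
  have ht1 : ‖b η‖ ≤ 1 := by
    calc ‖b η‖ ≤ ‖b‖ * ‖η‖ := b.le_opNorm η
    _ ≤ 1 := by rw [hη, mul_one]; exact hbnorm
  have hsym : (b : H →ₗ[ℂ] H).IsSymmetric :=
    (ContinuousLinearMap.isSelfAdjoint_iff_isSymmetric).mp hb.isSelfAdjoint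
  -- key: ‖b η‖ ^ 2 ≤ re ⟪b η, η⟫
  have key : ‖b η‖ ^ 2 ≤ RCLike.re ⟪b η, η⟫_ℂ := by
    have h0 : 0 ≤ RCLike.re ⟪b (η - b η), η - b η⟫_ℂ := hb.re_inner_nonneg_left _
    have e1 : ⟪b (b η), η⟫_ℂ = ⟪b η, b η⟫_ℂ := hsym (b η) η
    have h2 : RCLike.re ⟪b (b η), b η⟫_ℂ ≤ ‖b η‖ ^ 2 := by
      calc RCLike.re ⟪b (b η), b η⟫_ℂ ≤ ‖(⟪b (b η), b η⟫_ℂ : ℂ)‖ := RCLike.re_le_norm _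
      _ ≤ ‖b (b η)‖ * ‖b η‖ := norm_inner_le_norm _ _
      _ ≤ (‖b‖ * ‖b η‖) * ‖b η‖ := by gcongr; exact b.le_opNorm _
      _ ≤ (1 * ‖b η‖) * ‖b η‖ := by gcongr
      _ = ‖b η‖ ^ 2 := by ring
    have expand : RCLike.re ⟪b (η - b η), η - b η⟫_ℂ
        = RCLike.re ⟪b η, η⟫_ℂ - 2 * ‖b η‖ ^ 2 + RCLike.re ⟪b (b η), b η⟫_ℂ := by
      rw [map_sub, inner_sub_left, inner_sub_right, inner_sub_right, e1]
      simp only [map_sub, inner_self_eq_norm_sq]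
      ring
    rw [expand] at h0
    linarith
  -- hence ‖b η - η‖ ^ 2 ≤ 2 * (1 - ‖b η‖)
  have hsq : ‖b η - η‖ ^ 2 ≤ 2 * (1 - ‖b η‖) := by
    have := @norm_sub_sq ℂ _ _ _ _ (b η) η
    rw [hη] at this
    nlinarith [this, key, ht0, ht1]
  set x : ℝ := 1 - ‖b η‖ with hx
  have hx0 : 0 ≤ x := by rw [hx]; linarith
  have h1 : ‖b η - η‖ ≤ Real.sqrt (2 * x) := Real.le_sqrt_of_sq_le hsq
  have h13 : (0:ℝ) ≤ x ^ ((1 : ℝ) / 3) := Real.rpow_nonneg hx0 _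
  have h2 : Real.sqrt x ≤ x ^ ((1 : ℝ) / 3) := by
    rcases hx0.eq_or_lt with h | h
    · rw [← h]
      simp [Real.rpow_eq_zero_iff_of_nonneg]
    · rw [Real.sqrt_eq_rpow]
      exact Real.rpow_le_rpow_of_exponent_ge h (by rw [hx]; linarith) (by norm_num)
  calc ‖b η - η‖ ≤ Real.sqrt (2 * x) := h1
  _ = Real.sqrt 2 * Real.sqrt x := Real.sqrt_mul (by norm_num) x
  _ ≤ 2 * (x ^ ((1 : ℝ) / 3)) := by
      have : Real.sqrt 2 ≤ 2 := by
        nlinarith [Real.sq_sqrt (by norm_num : (0:ℝ) ≤ 2), Real.sqrt_nonneg 2]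
      have hs : (0:ℝ) ≤ Real.sqrt x := Real.sqrt_nonneg x
      nlinarith [Real.sqrt_nonneg x]
  _ ≤ 4 * x ^ ((1 : ℝ) / 3) := by linarith
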